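/- arXiv:1507.03161 — 3 statements merged into one kernel-verified Lean document; each statement's English description precedes it below -/
import Mathlib

section
/- The ℤ/2-vector space X_{m+1} has dimension β_n. -/
open CategoryTheory AlgebraicTopology Finset

noncomputable section

/-- The singular chain complex functor with coefficients in a commutative ring `R`:
the free `R`-module functor applied levelwise to the singular simplicial set, followed by
the alternating face map complex. -/
def singularChainComplex (R : Type) [CommRing R] : TopCat ⥤ ChainComplex (ModuleCat R) ℕ :=
  TopCat.toSSet ⋙ ((SimplicialObject.whiskering _ _).obj (ModuleCat.free R)) ⋙
    alternatingFaceMapComplex _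

/-- Singular homology with coefficients in `R`, as a functor `TopCat ⥤ ModuleCat R`. -/
def SH (R : Type) [CommRing R] (q : ℕ) : TopCat ⥤ ModuleCat R :=
  singularChainComplex R ⋙ HomologicalComplex.homologyFunctor _ _ q

/-- View a morphism of `ModuleCat R` as a linear map. -/
def homToLinear {R : Type} [CommRing R] {M N : ModuleCat R} (f : M ⟶ N) : M →ₗ[R] N where
  toFun := f.hom
  map_add' := map_add f.hom
  map_smul' := map_smul f.hom

/-- `D_n = C(n-1, m-1)` for `n = 2m+1`. -/
def Dnum (m : ℕ) : ℕ := (2*m).choose (m-1)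

/-- `α_n = ∑_{i=0}^{m-1} 2^{m-1-i} C(2i, i)` for `n = 2m+1`. -/
def alphaNum (m : ℕ) : ℕ := ∑ i ∈ Finset.range m, 2^(m-1-i) * (2*i).choose i

/-- `β_n = D_n - α_n`. -/
def betaNum (m : ℕ) : ℕ := Dnum m - alphaNum m

/-- The polynomial ring `(ℤ/2)[R, V_1, …, V_{n-1}]` for `n = 2m+1`; the variable `none`
is `R` and the variable `some i` is `V_{i+1}`. -/
abbrev PolyRing (m : ℕ) := MvPolynomial (Option (Fin (2*m))) (ZMod 2)

/-- The relations (R1): `V_i² + R·V_i`. -/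
def rel1 (m : ℕ) : Set (PolyRing m) :=
  Set.range fun i : Fin (2*m) =>
    (MvPolynomial.X (some i))^2 + MvPolynomial.X none * MvPolynomial.X (some i)

/-- The relations (R2): `∏_{i∈S} V_i` for `|S| ≥ m`. -/
def rel2 (m : ℕ) : Set (PolyRing m) :=
  {p | ∃ S : Finset (Fin (2*m)), m ≤ S.card ∧ p = ∏ i ∈ S, MvPolynomial.X (some i)}

/-- The relations (R3): `∑_{S⊆L} R^{|L∖S|-1} ∏_{i∈S} V_i` for `|L| ≥ m+1`. -/
def rel3 (m : ℕ) : Set (PolyRing m) :=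
  {p | ∃ L : Finset (Fin (2*m)), m+1 ≤ L.card ∧
    p = ∑ S ∈ L.powerset,
      (MvPolynomial.X none)^(L.card - S.card - 1) * ∏ i ∈ S, MvPolynomial.X (some i)}

/-- The ideal `𝓘_n` generated by the relations (R1), (R2), (R3). -/
def idealI (m : ℕ) : Ideal (PolyRing m) := Ideal.span (rel1 m ∪ rel2 m ∪ rel3 m)

/-- The ring `Λ_n = (ℤ/2)[R, V_1, …, V_{n-1}]/𝓘_n`
(isomorphic to `H^*(M_n/τ; ℤ/2)` by Hausmann–Knutson). -/
abbrev LambdaRing (m : ℕ) := PolyRing m ⧸ idealI m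

/-- The degree-`q` homogeneous component `Λ_n^q` of `Λ_n`, i.e. the image in the quotient of
the homogeneous polynomials of degree `q`. -/
def LambdaComp (m q : ℕ) : Submodule (ZMod 2) (LambdaRing m) :=
  (MvPolynomial.homogeneousSubmodule (Option (Fin (2*m))) (ZMod 2) q).map
    (Ideal.Quotient.mkₐ (ZMod 2) (idealI m)).toLinearMap

/-- Multiplication by `R²` on `Λ_n`, as a `ℤ/2`-linear map. -/
def mulR2 (m : ℕ) : LambdaRing m →ₗ[ZMod 2] LambdaRing m :=
  LinearMap.mulLeft (ZMod 2)
    ((Ideal.Quotient.mkₐ (ZMod 2) (idealI m)) ((MvPolynomial.X none)^2))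

/-- The linear map `(ι → ℤ/2) →ₗ M` sending `ξ` to `∑ i, ξ i • v i`. -/
def lcomb {ι : Type} [Fintype ι] {M : Type} [AddCommMonoid M] [Module (ZMod 2) M]
    (v : ι → M) : (ι → ZMod 2) →ₗ[ZMod 2] M where
  toFun ξ := ∑ i, ξ i • v i
  map_add' ξ η := by simp [add_smul, Finset.sum_add_distrib]
  map_smul' c ξ := by simp [Finset.smul_sum, smul_smul]

/-- `p_L = ∑_S R·∏_{j∈S} V_j`, summed over the `(m-1)`-element subsets `S` of `L`. -/
def pPoly (m : ℕ) (L : Finset (Fin (2*m))) : PolyRing m :=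
  ∑ S ∈ L.powerset.filter (fun S => S.card = m - 1),
    MvPolynomial.X none * ∏ j ∈ S, MvPolynomial.X (some j)

/-- `f_L = ∑_S R^{|L∖S|-1}·∏_{j∈S} V_j`, summed over the subsets `S` of `L`
with `|S| ≤ m-2`. -/
def fPoly (m : ℕ) (L : Finset (Fin (2*m))) : PolyRing m :=
  ∑ S ∈ L.powerset.filter (fun S => S.card ≤ m - 2),
    (MvPolynomial.X none)^(L.card - S.card - 1) * ∏ j ∈ S, MvPolynomial.X (some j)


-- ### Auxiliary development ###


abbrev Idx (m k : ℕ) := {A : Finset (Fin (2*m)) // A.card = k}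
abbrev Fk (m k : ℕ) := Idx m k → ZMod 2

def ddMap (m k : ℕ) : Fk m (k+2) →ₗ[ZMod 2] Fk m k where
  toFun f := fun S => ∑ L : Idx m (k+2), if S.1 ⊆ L.1 then f L else 0
  map_add' f g := by
    funext S
    show (∑ L : Idx m (k+2), if S.1 ⊆ L.1 then (f + g) L else 0)
      = (∑ L : Idx m (k+2), if S.1 ⊆ L.1 then f L else 0)
        + (∑ L : Idx m (k+2), if S.1 ⊆ L.1 then g L else 0)
    rw [← Finset.sum_add_distrib]
    exact Finset.sum_congr rfl fun L _ => by split <;> simp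
  map_smul' c f := by
    funext S
    show (∑ L : Idx m (k+2), if S.1 ⊆ L.1 then (c • f) L else 0)
      = c • ∑ L : Idx m (k+2), if S.1 ⊆ L.1 then f L else 0
    rw [Finset.smul_sum]
    exact Finset.sum_congr rfl fun L _ => by split <;> simp

def uuMap (m k : ℕ) : Fk m k →ₗ[ZMod 2] Fk m (k+2) where
  toFun f := fun L => ∑ S : Idx m k, if S.1 ⊆ L.1 then f S else 0
  map_add' f g := by
    funext L
    show (∑ S : Idx m k, if S.1 ⊆ L.1 then (f + g) S else 0)
      = (∑ S : Idx m k, if S.1 ⊆ L.1 then f S else 0)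
        + (∑ S : Idx m k, if S.1 ⊆ L.1 then g S else 0)
    rw [← Finset.sum_add_distrib]
    exact Finset.sum_congr rfl fun S _ => by split <;> simp
  map_smul' c f := by
    funext L
    show (∑ S : Idx m k, if S.1 ⊆ L.1 then (c • f) S else 0)
      = c • ∑ S : Idx m k, if S.1 ⊆ L.1 then f S else 0
    rw [Finset.smul_sum]
    exact Finset.sum_congr rfl fun S _ => by split <;> simp

@[simp] lemma ddMap_apply (m k : ℕ) (f : Fk m (k+2)) (S : Idx m k) :
    ddMap m k f S = ∑ L : Idx m (k+2), if S.1 ⊆ L.1 then f L else 0 := rfl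

@[simp] lemma uuMap_apply (m k : ℕ) (f : Fk m k) (L : Idx m (k+2)) :
    uuMap m k f L = ∑ S : Idx m k, if S.1 ⊆ L.1 then f S else 0 := rfl

lemma sum_idx_ite (m r : ℕ) (P : Finset (Fin (2*m)) → Prop) [DecidablePred P] (x : ZMod 2) :
    (∑ L : Idx m r, if P L.1 then x else 0)
      = ((univ.filter fun A : Finset (Fin (2*m)) => A.card = r ∧ P A).card : ZMod 2) * x := by
  rw [← Finset.sum_subtype (univ.filter fun A : Finset (Fin (2*m)) => A.card = r)
    (by simp) (fun A => if P A then x else 0)]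
  rw [Finset.sum_ite, Finset.sum_const, Finset.sum_const_zero, add_zero,
    Finset.filter_filter, nsmul_eq_mul]


lemma card_filter_between {α : Type*} [DecidableEq α] [Fintype α] (S L : Finset α)
    (hSL : S ⊆ L) (c : ℕ) (hc : S.card ≤ c) :
    (univ.filter fun A : Finset α => A.card = c ∧ S ⊆ A ∧ A ⊆ L).card
      = (L.card - S.card).choose (c - S.card) := by
  rw [← Finset.card_sdiff_of_subset hSL, ← Finset.card_powersetCard (c - S.card) (L \ S)]
  apply Finset.card_bij' (i := fun A _ => A \ S) (j := fun C _ => S ∪ C)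
  · intro A hA
    simp only [Finset.mem_filter, Finset.mem_univ, true_and] at hA
    obtain ⟨hcard, hSA, hAL⟩ := hA
    rw [Finset.mem_powersetCard]
    exact ⟨Finset.sdiff_subset_sdiff hAL (Finset.Subset.refl S),
      by rw [Finset.card_sdiff_of_subset hSA, hcard]⟩
  · intro C hC
    rw [Finset.mem_powersetCard] at hC
    obtain ⟨hCL, hCcard⟩ := hC
    have hdisj : Disjoint S C := (Finset.sdiff_disjoint.mono_left hCL).symm
    simp only [Finset.mem_filter, Finset.mem_univ, true_and]
    refine ⟨?_, Finset.subset_union_left, ?_⟩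
    · rw [Finset.card_union_of_disjoint hdisj, hCcard]; omega
    · exact Finset.union_subset hSL (hCL.trans (Finset.sdiff_subset))
  · intro A hA
    simp only [Finset.mem_filter, Finset.mem_univ, true_and] at hA
    exact Finset.union_sdiff_of_subset hA.2.1
  · intro C hC
    rw [Finset.mem_powersetCard] at hC
    exact Finset.union_sdiff_cancel_left ((Finset.sdiff_disjoint.mono_left hC.1).symm)

lemma card_filter_superset {α : Type*} [DecidableEq α] [Fintype α] (B : Finset α)
    (r : ℕ) (h : B.card ≤ r) :
    (univ.filter fun A : Finset α => A.card = r ∧ B ⊆ A).card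
      = (Fintype.card α - B.card).choose (r - B.card) := by
  have h2 := card_filter_between B univ (Finset.subset_univ _) r h
  rw [Finset.card_univ] at h2
  rw [← h2]
  congr 1
  apply Finset.filter_congr
  intro A _
  simp [Finset.subset_univ]

lemma card_filter_superset_zero {α : Type*} [DecidableEq α] [Fintype α] (B : Finset α)
    (r : ℕ) (h : r < B.card) :
    (univ.filter fun A : Finset α => A.card = r ∧ B ⊆ A).card = 0 := by
  rw [Finset.card_eq_zero, Finset.filter_eq_empty_iff]
  rintro A - ⟨hA, hBA⟩
  have := Finset.card_le_card hBA
  omega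

lemma card_filter_subset {α : Type*} [DecidableEq α] [Fintype α] (D : Finset α) (c : ℕ) :
    (univ.filter fun A : Finset α => A.card = c ∧ A ⊆ D).card = D.card.choose c := by
  rw [← Finset.card_powersetCard]
  congr 1
  ext A
  simp [Finset.mem_powersetCard, and_comm]

lemma natCast_zmod2_eq_one {n : ℕ} (h : n % 2 = 1) : (n : ZMod 2) = 1 := by
  rw [← ZMod.natCast_mod n 2, h]; rfl

lemma natCast_zmod2_eq_zero {n : ℕ} (h : n % 2 = 0) : (n : ZMod 2) = 0 := by
  rw [← ZMod.natCast_mod n 2, h]; rfl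

lemma choose_two_mod (x : ℕ) : x.choose 2 % 2 = (x / 2) % 2 := by
  rcases Nat.even_or_odd x with ⟨q, hq⟩ | ⟨q, hq⟩
  · subst hq
    rcases Nat.eq_zero_or_pos q with rfl | hq0
    · simp
    · have h1 : q + q = 2 * q := by ring
      rw [Nat.choose_two_right, h1]
      have h2 : 2 * q * (2 * q - 1) / 2 = q * (2 * q - 1) := by
        rw [mul_assoc, Nat.mul_div_cancel_left _ (by norm_num : 0 < 2)]
      rw [h2, Nat.mul_mod]
      have h3 : (2 * q - 1) % 2 = 1 := by omega
      rw [h3, mul_one, Nat.mod_mod_of_dvd _ (dvd_refl 2)]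
      omega
  · subst hq
    rw [Nat.choose_two_right]
    have h2 : (2 * q + 1) * (2 * q + 1 - 1) / 2 = q * (2 * q + 1) := by
      have h0 : 2 * q + 1 - 1 = 2 * q := by omega
      rw [h0]
      have : (2 * q + 1) * (2 * q) = 2 * (q * (2 * q + 1)) := by ring
      rw [this, Nat.mul_div_cancel_left _ (by norm_num : 0 < 2)]
    rw [h2, Nat.mul_mod]
    have h3 : (2 * q + 1) % 2 = 1 := by omega
    rw [h3, mul_one, Nat.mod_mod_of_dvd _ (dvd_refl 2)]
    omega


lemma parity_aux (m k : ℕ) (hpar : (m+k) % 2 = 1) (hk2 : k+2 ≤ 2*m) :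
    ((2*m - (k+2))/2 % 2 + (k+2)/2 % 2) % 2 = 1 := by
  rcases Nat.even_or_odd k with ⟨t, rfl⟩ | ⟨t, rfl⟩
  · have h2 : 2*m - (t+t+2) = 2*(m - t - 1) := by omega
    have h3 : (2*(m-t-1))/2 = m - t - 1 := by omega
    have h4 : (t+t+2)/2 = t+1 := by omega
    rw [h2, h3, h4]
    omega
  · have h2 : 2*m - (2*t+1+2) = 2*(m - t - 2) + 1 := by omega
    have h3 : (2*(m-t-2)+1)/2 = m - t - 2 := by omega
    have h4 : (2*t+1+2)/2 = t+1 := by omega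
    rw [h2, h3, h4]
    omega

lemma coeff_key (m k : ℕ) (hpar : (m + k) % 2 = 1) (S T : Idx m (k+2)) :
    (((univ.filter fun A : Finset (Fin (2*m)) => A.card = k+2+2 ∧ S.1 ∪ T.1 ⊆ A).card
      + (univ.filter fun A : Finset (Fin (2*m)) => A.card = k ∧ A ⊆ S.1 ∩ T.1).card : ℕ) : ZMod 2)
      = if T = S then 1 else 0 := by
  have hS := S.2
  have hT := T.2
  have haS : (S.1 ∩ T.1).card ≤ k + 2 := by
    have h : (S.1 ∩ T.1).card ≤ S.1.card := Finset.card_le_card Finset.inter_subset_left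
    omega
  have hu : (S.1 ∪ T.1).card + (S.1 ∩ T.1).card = (k+2) + (k+2) := by
    rw [Finset.card_union_add_card_inter, hS, hT]
  have hub : (S.1 ∪ T.1).card ≤ 2*m := by
    have h := Finset.card_le_univ (S.1 ∪ T.1)
    rwa [Fintype.card_fin] at h
  rw [card_filter_subset]
  by_cases hTS : T = S
  · subst hTS
    simp only [Finset.union_self, Finset.inter_self]
    rw [card_filter_superset _ _ (by omega : T.1.card ≤ k+2+2), hT, Fintype.card_fin]
    have e1 : k+2+2 - (k+2) = 2 := by omega
    rw [e1]
    have e2 : (k+2).choose k = (k+2).choose 2 := by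
      rw [← Nat.choose_symm (by omega : k ≤ k+2)]
      congr 1
      omega
    rw [e2, if_pos trivial]
    apply natCast_zmod2_eq_one
    have hk2 : k + 2 ≤ 2*m := by
      have h := Finset.card_le_univ T.1
      rw [Fintype.card_fin, hT] at h
      omega
    rw [Nat.add_mod, choose_two_mod, choose_two_mod]
    exact parity_aux m k hpar hk2
  · rw [if_neg hTS]
    have ha2 : (S.1 ∩ T.1).card ≤ k+1 := by
      rcases Nat.lt_or_ge ((S.1 ∩ T.1).card) (k+2) with h | h
      · omega
      · exfalso
        have h' : (S.1 ∩ T.1).card = k+2 := le_antisymm haS h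
        have e1 : S.1 ∩ T.1 = S.1 :=
          Finset.eq_of_subset_of_card_le Finset.inter_subset_left (by omega)
        have e2 : S.1 ∩ T.1 = T.1 :=
          Finset.eq_of_subset_of_card_le Finset.inter_subset_right (by omega)
        exact hTS (Subtype.ext (by rw [← e2, e1]))
    apply natCast_zmod2_eq_zero
    rcases Nat.lt_or_ge ((S.1 ∩ T.1).card) k with hak | hak
    · rw [Nat.choose_eq_zero_of_lt hak,
        card_filter_superset_zero _ _ (by omega : k+2+2 < (S.1 ∪ T.1).card)]
    · rcases Nat.eq_or_lt_of_le hak with heq | hlt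
      · rw [card_filter_superset _ _ (by omega : (S.1 ∪ T.1).card ≤ k+2+2),
          Fintype.card_fin]
        have hu4 : (S.1 ∪ T.1).card = k + 4 := by omega
        rw [hu4, ← heq, Nat.choose_self]
        have e0 : k+2+2 - (k+4) = 0 := by omega
        rw [e0, Nat.choose_zero_right]
      · have ha1 : (S.1 ∩ T.1).card = k+1 := by omega
        have hu3 : (S.1 ∪ T.1).card = k+3 := by omega
        rw [card_filter_superset _ _ (by omega : (S.1 ∪ T.1).card ≤ k+2+2),
          Fintype.card_fin, hu3, ha1]
        have e1 : k+2+2-(k+3) = 1 := by omega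
        rw [e1, Nat.choose_one_right, Nat.choose_succ_self_right]
        omega

lemma homotopy (m k : ℕ) (hpar : (m + k) % 2 = 1) (f : Fk m (k+2)) :
    ddMap m (k+2) (uuMap m (k+2) f) + uuMap m k (ddMap m k f) = f := by
  funext S
  have h1 : ddMap m (k+2) (uuMap m (k+2) f) S
      = ∑ T : Idx m (k+2),
          ((univ.filter fun A : Finset (Fin (2*m)) =>
            A.card = k+2+2 ∧ S.1 ∪ T.1 ⊆ A).card : ZMod 2) * f T := by
    rw [ddMap_apply]
    have e1 : ∀ L : Idx m (k+2+2), (if S.1 ⊆ L.1 then uuMap m (k+2) f L else 0)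
        = ∑ T : Idx m (k+2), if S.1 ∪ T.1 ⊆ L.1 then f T else 0 := by
      intro L
      rw [uuMap_apply]
      split_ifs with h
      · refine Finset.sum_congr rfl fun T _ => ?_
        simp only [Finset.union_subset_iff, h, true_and]
      · symm
        apply Finset.sum_eq_zero
        intro T _
        rw [if_neg]
        exact fun hc => h ((Finset.subset_union_left).trans hc)
    rw [Finset.sum_congr rfl fun L _ => e1 L, Finset.sum_comm]
    exact Finset.sum_congr rfl fun T _ =>
      sum_idx_ite m (k+2+2) (fun A => S.1 ∪ T.1 ⊆ A) (f T)
  have h2 : uuMap m k (ddMap m k f) S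
      = ∑ T : Idx m (k+2),
          ((univ.filter fun A : Finset (Fin (2*m)) =>
            A.card = k ∧ A ⊆ S.1 ∩ T.1).card : ZMod 2) * f T := by
    rw [uuMap_apply]
    have e1 : ∀ S' : Idx m k, (if S'.1 ⊆ S.1 then ddMap m k f S' else 0)
        = ∑ T : Idx m (k+2), if S'.1 ⊆ S.1 ∩ T.1 then f T else 0 := by
      intro S'
      rw [ddMap_apply]
      split_ifs with h
      · refine Finset.sum_congr rfl fun T _ => ?_
        simp only [Finset.subset_inter_iff, h, true_and]
      · symm
        apply Finset.sum_eq_zero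
        intro T _
        rw [if_neg]
        exact fun hc => h (hc.trans Finset.inter_subset_left)
    rw [Finset.sum_congr rfl fun S' _ => e1 S', Finset.sum_comm]
    exact Finset.sum_congr rfl fun T _ =>
      sum_idx_ite m k (fun A => A ⊆ S.1 ∩ T.1) (f T)
  have h3 : (ddMap m (k+2) (uuMap m (k+2) f) + uuMap m k (ddMap m k f)) S
      = ddMap m (k+2) (uuMap m (k+2) f) S + uuMap m k (ddMap m k f) S := rfl
  rw [h3, h1, h2, ← Finset.sum_add_distrib]
  have h4 : ∀ T : Idx m (k+2),
      ((univ.filter fun A : Finset (Fin (2*m)) =>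
          A.card = k+2+2 ∧ S.1 ∪ T.1 ⊆ A).card : ZMod 2) * f T
        + ((univ.filter fun A : Finset (Fin (2*m)) =>
          A.card = k ∧ A ⊆ S.1 ∩ T.1).card : ZMod 2) * f T
      = (if T = S then 1 else 0) * f T := by
    intro T
    rw [← add_mul, ← Nat.cast_add, coeff_key m k hpar S T]
  rw [Finset.sum_congr rfl fun T _ => h4 T]
  simp
lemma dd_dd (m k : ℕ) (f : Fk m (k+2+2)) : ddMap m k (ddMap m (k+2) f) = 0 := by
  funext S
  rw [ddMap_apply]
  have e1 : ∀ M : Idx m (k+2), (if S.1 ⊆ M.1 then ddMap m (k+2) f M else 0)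
      = ∑ L : Idx m (k+2+2), if S.1 ⊆ M.1 ∧ M.1 ⊆ L.1 then f L else 0 := by
    intro M
    rw [ddMap_apply]
    split_ifs with h
    · refine Finset.sum_congr rfl fun L _ => ?_
      simp only [h, true_and]
    · symm
      apply Finset.sum_eq_zero
      intro L _
      rw [if_neg]
      rintro ⟨h1, -⟩
      exact h h1
  rw [Finset.sum_congr rfl fun M _ => e1 M, Finset.sum_comm]
  rw [Pi.zero_apply]
  apply Finset.sum_eq_zero
  intro L _
  rw [sum_idx_ite m (k+2) (fun A => S.1 ⊆ A ∧ A ⊆ L.1) (f L)]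
  by_cases hSL : S.1 ⊆ L.1
  · have hc : (univ.filter fun A : Finset (Fin (2*m)) =>
        A.card = k+2 ∧ S.1 ⊆ A ∧ A ⊆ L.1).card = (L.1.card - S.1.card).choose (k+2 - S.1.card) :=
      card_filter_between S.1 L.1 hSL (k+2) (by rw [S.2]; omega)
    rw [hc, S.2, L.2]
    have e2 : k+2+2 - k = 4 := by omega
    have e3 : k+2 - k = 2 := by omega
    rw [e2, e3]
    rw [natCast_zmod2_eq_zero (by decide : (Nat.choose 4 2) % 2 = 0), zero_mul]
  · have hc : (univ.filter fun A : Finset (Fin (2*m)) =>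
        A.card = k+2 ∧ S.1 ⊆ A ∧ A ⊆ L.1).card = 0 := by
      rw [Finset.card_eq_zero, Finset.filter_eq_empty_iff]
      rintro A - ⟨-, h1, h2⟩
      exact hSL (h1.trans h2)
    rw [hc]
    norm_num

lemma ker_eq_range (m k : ℕ) (hpar : (m + k) % 2 = 1) :
    LinearMap.ker (ddMap m k) = LinearMap.range (ddMap m (k+2)) := by
  ext f
  rw [LinearMap.mem_ker, LinearMap.mem_range]
  constructor
  · intro hf
    refine ⟨uuMap m (k+2) f, ?_⟩
    have h := homotopy m k hpar f
    rw [hf, map_zero, add_zero] at h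
    exact h
  · rintro ⟨g, rfl⟩
    exact dd_dd m k g

lemma finrank_Fk (m k : ℕ) : Module.finrank (ZMod 2) (Fk m k) = (2*m).choose k := by
  rw [Module.finrank_pi, Fintype.card_finset_len, Fintype.card_fin]

def KD (m : ℕ) : ℕ → ℕ → ℕ
  | 0, _ => 0
  | d+1, k => (2*m).choose (k+4) - KD m d (k+2)

lemma ladder (m : ℕ) : ∀ d k, (m + k) % 2 = 1 → 2*m ≤ k + 2 + 2*d →
    Module.finrank (ZMod 2) (LinearMap.ker (ddMap m k)) = KD m d k := by
  intro d
  induction d with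
  | zero =>
    intro k hpar hk
    rw [ker_eq_range m k hpar]
    have h1 : Module.finrank (ZMod 2) (LinearMap.range (ddMap m (k+2)))
        ≤ Module.finrank (ZMod 2) (Fk m (k+2+2)) := LinearMap.finrank_range_le _
    rw [finrank_Fk] at h1
    have h2 : (2*m).choose (k+2+2) = 0 := Nat.choose_eq_zero_of_lt (by omega)
    rw [h2] at h1
    simpa [KD] using Nat.le_zero.mp h1
  | succ d ih =>
    intro k hpar hk
    rw [ker_eq_range m k hpar]
    have h1 := LinearMap.finrank_range_add_finrank_ker (ddMap m (k+2))
    have h2 : Module.finrank (ZMod 2) (LinearMap.ker (ddMap m (k+2))) = KD m d (k+2) :=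
      ih (k+2) (by omega) (by omega)
    rw [finrank_Fk] at h1
    have e1 : (2*m).choose (k+2+2) = (2*m).choose (k+4) := by
      rw [show k+2+2 = k+4 from by omega]
    rw [e1] at h1
    show _ = (2*m).choose (k+4) - KD m d (k+2)
    omega
lemma KD_le (m : ℕ) : ∀ d k, KD m d k ≤ (2*m).choose (k+4) := by
  intro d
  cases d with
  | zero => intro k; exact Nat.zero_le _
  | succ d => intro k; exact Nat.sub_le _ _

lemma choose_down (n j : ℕ) (h : n ≤ 2*j) : n.choose (j+1) ≤ n.choose j := by
  rcases Nat.lt_or_ge n (j+1) with hn | hn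
  · rw [Nat.choose_eq_zero_of_lt hn]; exact Nat.zero_le _
  · have h1 : n.choose (j+1) = n.choose (n - (j+1)) := (Nat.choose_symm hn).symm
    have h2 : n.choose j = n.choose (n - j) := (Nat.choose_symm (by omega)).symm
    rw [h1, h2, show n - j = (n - (j+1)) + 1 from by omega]
    exact Nat.choose_le_succ_of_lt_half_left (by omega)

lemma choose_down2 (n j : ℕ) (h : n ≤ 2*j) : n.choose (j+2) ≤ n.choose j :=
  le_trans (choose_down n (j+1) (by omega)) (choose_down n j h)

lemma KD_cast (m : ℕ) : ∀ d k, m ≤ k + 4 →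
    (KD m d k : ℤ) = ∑ j ∈ Finset.range d, (-1)^j * ((2*m).choose (k+4+2*j) : ℤ) := by
  intro d
  induction d with
  | zero => intro k _; simp [KD]
  | succ d ih =>
    intro k hk
    have hb : KD m d (k+2) ≤ (2*m).choose (k+4) := by
      have b1 := KD_le m d (k+2)
      have b2 : (2*m).choose (k+2+4) = (2*m).choose ((k+4)+2) := by
        rw [show k+2+4 = (k+4)+2 from by omega]
      have b3 := choose_down2 (2*m) (k+4) (by omega)
      omega
    show ((2*m).choose (k+4) - KD m d (k+2) : ℕ) = (_ : ℤ)
    rw [Nat.cast_sub hb, ih (k+2) (by omega), Finset.sum_range_succ']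
    have e1 : ∀ j ∈ Finset.range d, (-1:ℤ)^(j+1) * ((2*m).choose (k+4+2*(j+1)) : ℤ)
        = -((-1)^j * ((2*m).choose (k+2+4+2*j) : ℤ)) := by
      intro j _
      rw [show k+4+2*(j+1) = k+2+4+2*j from by omega, pow_succ]
      ring
    rw [Finset.sum_congr rfl e1, Finset.sum_neg_distrib]
    simp only [pow_zero, one_mul, mul_zero, add_zero]
    ring


lemma pascal2 (n r : ℕ) : (n+2).choose (r+2) = n.choose r + 2 * n.choose (r+1) + n.choose (r+2) := by
  rw [show n+2 = (n+1)+1 from rfl, Nat.choose_succ_succ (n+1) (r+1),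
    Nat.choose_succ_succ n r, Nat.choose_succ_succ n (r+1)]
  ring

lemma alphaNum_succ (m : ℕ) (hm : 1 ≤ m) :
    alphaNum (m+1) = 2 * alphaNum m + (2*m).choose m := by
  unfold alphaNum
  rw [Finset.sum_range_succ]
  rw [show m+1-1-m = 0 from by omega, pow_zero, one_mul]
  congr 1
  rw [Finset.mul_sum]
  refine Finset.sum_congr rfl fun i hi => ?_
  rw [Finset.mem_range] at hi
  rw [show m+1-1-i = (m-1-i)+1 from by omega, pow_succ]
  ring

lemma alpha_eq (m : ℕ) (hm : 1 ≤ m) :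
    (alphaNum m : ℤ) = ∑ j ∈ Finset.range m, (-1)^j * ((2*m).choose (m+1+2*j) : ℤ) := by
  induction m with
  | zero => omega
  | succ m ih =>
    rcases Nat.eq_zero_or_pos m with rfl | hm1
    · simp [alphaNum]
    · rw [alphaNum_succ m hm1]
      have pascal : ∀ j ∈ Finset.range (m+1), ((2*(m+1)).choose (m+1+1+2*j) : ℤ)
          = (((2*m).choose (m+2*j) : ℤ) + (2*((2*m).choose (m+1+2*j) : ℤ)
            + ((2*m).choose (m+2+2*j) : ℤ))) := by
        intro j _
        rw [show 2*(m+1) = 2*m+2 from by ring, show m+1+1+2*j = (m+2*j)+2 from by omega,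
          pascal2 (2*m) (m+2*j)]
        push_cast
        rw [show m+2*j+1 = m+1+2*j from by omega, show m+2*j+2 = m+2+2*j from by omega]
        ring
      have expand : ∀ j ∈ Finset.range (m+1), (-1:ℤ)^j * ((2*(m+1)).choose (m+1+1+2*j) : ℤ)
          = (-1)^j * ((2*m).choose (m+2*j) : ℤ)
            + ((-1)^j * (2*((2*m).choose (m+1+2*j) : ℤ))
              + (-1)^j * ((2*m).choose (m+2+2*j) : ℤ)) := by
        intro j hj
        rw [pascal j hj]
        ring
      rw [Finset.sum_congr rfl expand, Finset.sum_add_distrib, Finset.sum_add_distrib]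
      have hTB : ∑ j ∈ Finset.range (m+1), (-1:ℤ)^j * (2*((2*m).choose (m+1+2*j) : ℤ))
          = 2 * (alphaNum m : ℤ) := by
        rw [Finset.sum_range_succ, Nat.choose_eq_zero_of_lt (by omega : 2*m < m+1+2*m)]
        rw [ih hm1]
        push_cast
        rw [Finset.mul_sum]
        rw [Finset.sum_congr rfl (fun j _ => by ring :
          ∀ j ∈ Finset.range m, (-1:ℤ)^j * (2*((2*m).choose (m+1+2*j) : ℤ))
            = 2 * ((-1)^j * ((2*m).choose (m+1+2*j) : ℤ)))]
        simp
      have hT02 : (∑ j ∈ Finset.range (m+1), (-1:ℤ)^j * ((2*m).choose (m+2*j) : ℤ))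
          + (∑ j ∈ Finset.range (m+1), (-1:ℤ)^j * ((2*m).choose (m+2+2*j) : ℤ))
          = ((2*m).choose m : ℤ) := by
        rw [Finset.sum_range_succ (f := fun j => (-1:ℤ)^j * ((2*m).choose (m+2+2*j) : ℤ)),
          Nat.choose_eq_zero_of_lt (by omega : 2*m < m+2+2*m)]
        rw [Finset.sum_range_succ']
        have e1 : ∀ j ∈ Finset.range m, (-1:ℤ)^(j+1) * ((2*m).choose (m+2*(j+1)) : ℤ)
            = -((-1)^j * ((2*m).choose (m+2+2*j) : ℤ)) := by
          intro j _
          rw [show m+2*(j+1) = m+2+2*j from by omega, pow_succ]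
          ring
        rw [Finset.sum_congr rfl e1, Finset.sum_neg_distrib]
        simp only [pow_zero, one_mul, mul_zero, add_zero, Nat.cast_zero]
        ring
      push_cast
      rw [hTB]
      rw [← hT02]
      push_cast
      ring

lemma KD_eq_beta (m : ℕ) (hm : 2 ≤ m) : KD m m (m-1) = betaNum m := by
  obtain ⟨n, rfl⟩ : ∃ n, m = n+2 := ⟨m-2, by omega⟩
  have h1 : (KD (n+2) (n+2) (n+1) : ℤ)
      = ∑ j ∈ Finset.range (n+2), (-1)^j * ((2*(n+2)).choose (n+5+2*j) : ℤ) := by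
    rw [KD_cast (n+2) (n+2) (n+1) (by omega)]
  have h2 := alpha_eq (n+2) (by omega)
  -- rewrite h2's sum: (n+2)+1+2*j = n+3+2*j
  rw [Finset.sum_congr rfl (fun j _ => by rw [show n+2+1+2*j = n+3+2*j from by omega] :
    ∀ j ∈ Finset.range (n+2), (-1:ℤ)^j * ((2*(n+2)).choose (n+2+1+2*j) : ℤ)
      = (-1)^j * ((2*(n+2)).choose (n+3+2*j) : ℤ))] at h2
  have key : (alphaNum (n+2) : ℤ) + (KD (n+2) (n+2) (n+1) : ℤ)
      = ((2*(n+2)).choose (n+3) : ℤ) := by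
    rw [h1, h2]
    rw [Finset.sum_range_succ (f := fun j => (-1:ℤ)^j * ((2*(n+2)).choose (n+5+2*j) : ℤ)),
      Nat.choose_eq_zero_of_lt (by omega : 2*(n+2) < n+5+2*(n+1))]
    rw [Finset.sum_range_succ' (f := fun j => (-1:ℤ)^j * ((2*(n+2)).choose (n+3+2*j) : ℤ))]
    have e1 : ∀ j ∈ Finset.range (n+1), (-1:ℤ)^(j+1) * ((2*(n+2)).choose (n+3+2*(j+1)) : ℤ)
        = -((-1)^j * ((2*(n+2)).choose (n+5+2*j) : ℤ)) := by
      intro j _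
      rw [show n+3+2*(j+1) = n+5+2*j from by omega, pow_succ]
      ring
    rw [Finset.sum_congr rfl e1, Finset.sum_neg_distrib]
    simp only [pow_zero, one_mul, mul_zero, add_zero, Nat.cast_zero]
    ring
  have hsymm : (2*(n+2)).choose (n+3) = (2*(n+2)).choose (n+1) := by
    have := Nat.choose_symm (by omega : n+3 ≤ 2*(n+2))
    rw [show 2*(n+2) - (n+3) = n+1 from by omega] at this
    exact this.symm
  have hD : Dnum (n+2) = (2*(n+2)).choose (n+3) := by
    unfold Dnum
    rw [hsymm, show n+2-1 = n+1 from by omega]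
  have hle : alphaNum (n+2) ≤ Dnum (n+2) := by
    have hpos : (0:ℤ) ≤ (KD (n+2) (n+2) (n+1) : ℤ) := Int.natCast_nonneg _
    have := key
    rw [hD]
    omega
  have : (betaNum (n+2) : ℤ) = (KD (n+2) (n+2) (n+1) : ℤ) := by
    unfold betaNum
    rw [Nat.cast_sub hle, hD]
    omega
  exact_mod_cast this.symm


def expS (m : ℕ) (S : Finset (Fin (2*m))) : Option (Fin (2*m)) →₀ ℕ :=
  Finsupp.single none 1 + ∑ j ∈ S, Finsupp.single (some j) 1

def monoS (m : ℕ) (S : Finset (Fin (2*m))) : PolyRing m :=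
  MvPolynomial.X none * ∏ j ∈ S, MvPolynomial.X (some j)

lemma monoS_eq (m : ℕ) (S : Finset (Fin (2*m))) :
    monoS m S = MvPolynomial.monomial (expS m S) (1 : ZMod 2) := by
  unfold monoS expS
  have hprod : (∏ j ∈ S, MvPolynomial.X (some j) : PolyRing m)
      = MvPolynomial.monomial (∑ j ∈ S, Finsupp.single (some j) 1) (1 : ZMod 2) := by
    induction S using Finset.cons_induction with
    | empty => simp
    | cons a s ha ih =>
      rw [Finset.prod_cons, Finset.sum_cons, ih]
      rw [show (MvPolynomial.X (some a) : PolyRing m)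
        = MvPolynomial.monomial (Finsupp.single (some a) 1) 1 from by
          rw [← MvPolynomial.X_pow_eq_monomial, pow_one]]
      rw [MvPolynomial.monomial_mul, one_mul]
  rw [hprod]
  rw [show (MvPolynomial.X none : PolyRing m)
    = MvPolynomial.monomial (Finsupp.single none 1) 1 from by
      rw [← MvPolynomial.X_pow_eq_monomial, pow_one]]
  rw [MvPolynomial.monomial_mul, one_mul]

lemma expS_apply_some (m : ℕ) (S : Finset (Fin (2*m))) (j : Fin (2*m)) :
    expS m S (some j) = if j ∈ S then 1 else 0 := by
  unfold expS
  rw [Finsupp.add_apply, Finsupp.single_apply, if_neg (by simp : ¬ (none = some j)), zero_add]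
  rw [Finsupp.finset_sum_apply]
  simp [Finsupp.single_apply]

lemma expS_inj (m : ℕ) {S S' : Finset (Fin (2*m))} (h : expS m S = expS m S') : S = S' := by
  ext j
  have h2 := DFunLike.congr_fun h (some j)
  rw [expS_apply_some, expS_apply_some] at h2
  by_cases h3 : j ∈ S <;> by_cases h4 : j ∈ S' <;> simp [h3, h4] at h2 ⊢ <;> tauto

lemma kernel_mem_iff (m' : ℕ) (ξ : Fk (m'+2) (m'+2+1)) :
    lcomb (fun L : Idx (m'+2) (m'+2+1) => pPoly (m'+2) L.1) ξ = 0
      ↔ ddMap (m'+2) (m'+1) ξ = 0 := by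
  classical
  set c : Finset (Fin (2*(m'+2))) → ZMod 2 :=
    fun S => ∑ L : Idx (m'+2) (m'+2+1), if S ⊆ L.1 then ξ L else 0 with hc
  have hre : lcomb (fun L : Idx (m'+2) (m'+2+1) => pPoly (m'+2) L.1) ξ
      = ∑ S ∈ univ.filter (fun S : Finset (Fin (2*(m'+2))) => S.card = m'+1),
          c S • monoS (m'+2) S := by
    show (∑ L : Idx (m'+2) (m'+2+1), ξ L • pPoly (m'+2) L.1) = _
    have hp : ∀ L : Idx (m'+2) (m'+2+1), ξ L • pPoly (m'+2) L.1
        = ∑ S ∈ univ.filter (fun S : Finset (Fin (2*(m'+2))) => S.card = m'+1),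
            (if S ⊆ L.1 then ξ L • monoS (m'+2) S else 0) := by
      intro L
      unfold pPoly
      rw [Finset.smul_sum]
      have hset : L.1.powerset.filter (fun S => S.card = m'+2-1)
          = (univ.filter (fun S : Finset (Fin (2*(m'+2))) => S.card = m'+1)).filter
              (fun S => S ⊆ L.1) := by
        ext S
        simp only [Finset.mem_filter, Finset.mem_powerset, Finset.mem_univ, true_and]
        constructor
        · rintro ⟨h1, h2⟩; exact ⟨h2, h1⟩
        · rintro ⟨h1, h2⟩; exact ⟨h2, h1⟩
      rw [hset, Finset.sum_filter]
      rfl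
    rw [Finset.sum_congr rfl fun L _ => hp L, Finset.sum_comm]
    refine Finset.sum_congr rfl fun S _ => ?_
    have hterm : ∀ L ∈ (univ : Finset (Idx (m'+2) (m'+2+1))),
        (if S ⊆ L.1 then ξ L • monoS (m'+2) S else 0)
          = (if S ⊆ L.1 then ξ L else 0) • monoS (m'+2) S := by
      intro L _
      split <;> simp
    rw [Finset.sum_congr rfl hterm, ← Finset.sum_smul]
  constructor
  · intro h
    rw [hre] at h
    funext S0
    have hmem : S0.1 ∈ univ.filter (fun S : Finset (Fin (2*(m'+2))) => S.card = m'+1) := by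
      simp [S0.2]
    have hco := congrArg (MvPolynomial.coeff (expS (m'+2) S0.1)) h
    rw [MvPolynomial.coeff_sum] at hco
    simp only [MvPolynomial.coeff_smul] at hco
    rw [Finset.sum_congr rfl (fun S _ => by rw [monoS_eq, MvPolynomial.coeff_monomial])] at hco
    rw [Finset.sum_eq_single_of_mem S0.1 hmem] at hco
    · rw [if_pos rfl] at hco
      simp only [smul_eq_mul, mul_one, MvPolynomial.coeff_zero] at hco
      show ddMap (m'+2) (m'+1) ξ S0 = 0
      rw [ddMap_apply]
      exact hco
    · intro S _ hne
      rw [if_neg (fun hexp => hne (expS_inj _ hexp)), smul_zero]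
  · intro h
    rw [hre]
    apply Finset.sum_eq_zero
    intro S hS
    have hcard : S.card = m'+1 := (Finset.mem_filter.mp hS).2
    have : c S = 0 := by
      have h2 := congrFun h (⟨S, hcard⟩ : Idx (m'+2) (m'+1))
      rw [ddMap_apply] at h2
      exact h2
    rw [this, zero_smul]


/-- **Lemma 7 (i).** The space `X_{m+1} = {ξ : ∑_L ξ_L p_L = 0}` has dimension `β_n`. -/
theorem statement10 (m : ℕ) (hm : 2 ≤ m) :
    Module.finrank (ZMod 2)
      (LinearMap.ker (lcomb (fun L : {L : Finset (Fin (2*m)) // L.card = m + 1} =>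
        pPoly m L.1)))
      = betaNum m := by
  obtain ⟨m', rfl⟩ : ∃ m', m = m' + 2 := ⟨m - 2, by omega⟩
  have hker : LinearMap.ker (lcomb
        (fun L : {L : Finset (Fin (2*(m'+2))) // L.card = (m'+2) + 1} => pPoly (m'+2) L.1))
      = LinearMap.ker (ddMap (m'+2) (m'+1)) := by
    ext ξ
    rw [LinearMap.mem_ker, LinearMap.mem_ker]
    exact kernel_mem_iff m' ξ
  rw [hker]
  rw [ladder (m'+2) (m'+2) (m'+1) (by omega) (by omega)]
  exact KD_eq_beta (m'+2) (by omega)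

end
end

section
/- The ℤ/2-linear map X_{m+1} → (ℤ/2)[R, V_1, …, V_{n-1}] given by ξ ↦ Σ_{i=1}^{D_n} ξ_i·f_i is injective; equivalently, for any ℤ/2-basis Ω of X_{m+1}, the polynomials F_ξ = Σ_{i=1}^{D_n} ξ_i·f_i for ξ ∈ Ω are linearly independent over ℤ/2 in the polynomial ring. -/
open CategoryTheory AlgebraicTopology Finset

noncomputable section

/-- The exponent vector of the monomial `R^a ∏_{j∈S} V_j`. -/
def eFun (m : ℕ) (S : Finset (Fin (2*m))) (a : ℕ) : Option (Fin (2*m)) →₀ ℕ :=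
  Finsupp.single none a + ∑ j ∈ S, Finsupp.single (some j) 1

lemma eFun_some (m : ℕ) (S : Finset (Fin (2*m))) (a : ℕ) (j : Fin (2*m)) :
    eFun m S a (some j) = if j ∈ S then 1 else 0 := by
  classical
  simp only [eFun, Finsupp.add_apply, Finsupp.single_apply, Finsupp.finset_sum_apply]
  simp [Finset.sum_ite_eq']

lemma eFun_inj {m : ℕ} {S T : Finset (Fin (2*m))} {a b : ℕ}
    (h : eFun m S a = eFun m T b) : S = T := by
  ext j
  have := congrArg (fun f => f (some j)) h
  simp only [eFun_some] at this
  by_cases hS : j ∈ S <;> by_cases hT : j ∈ T <;> simp_all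

lemma term_eq_monomial (m : ℕ) (S : Finset (Fin (2*m))) (a : ℕ) :
    ((MvPolynomial.X none : PolyRing m)^a * ∏ j ∈ S, MvPolynomial.X (some j)) =
      MvPolynomial.monomial (eFun m S a) 1 := by
  classical
  have hprod : (∏ j ∈ S, (MvPolynomial.X (some j) : PolyRing m)) =
      MvPolynomial.monomial (∑ j ∈ S, Finsupp.single (some j) 1) 1 := by
    induction S using Finset.induction_on with
    | empty => simp
    | insert _ _ h ih =>
        rw [Finset.prod_insert h, ih, Finset.sum_insert h,
          MvPolynomial.X, MvPolynomial.monomial_mul, one_mul]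
  rw [hprod, MvPolynomial.X_pow_eq_monomial, MvPolynomial.monomial_mul, one_mul, eFun]

lemma coeff_fPoly (m : ℕ) (L : Finset (Fin (2*m))) (hL : L.card = m+1)
    (S : Finset (Fin (2*m))) (hS : S.card ≤ m - 2) :
    (fPoly m L).coeff (eFun m S (m - S.card)) = if S ⊆ L then 1 else 0 := by
  classical
  unfold fPoly
  rw [MvPolynomial.coeff_sum]
  have hterm : ∀ T ∈ L.powerset.filter (fun T => T.card ≤ m - 2),
      ((MvPolynomial.X (none : Option (Fin (2*m))) : PolyRing m)^(L.card - T.card - 1) *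
        ∏ j ∈ T, MvPolynomial.X (some j)).coeff (eFun m S (m - S.card)) =
      if T = S then 1 else 0 := by
    intro T _
    rw [term_eq_monomial, MvPolynomial.coeff_monomial]
    congr 1
    refine propext ⟨fun h => eFun_inj h, fun h => ?_⟩
    subst h; congr 1; omega
  rw [Finset.sum_congr rfl hterm, Finset.sum_ite_eq'
    (L.powerset.filter fun T => T.card ≤ m - 2) S (fun _ => (1 : ZMod 2))]
  simp [hS]

lemma coeff_pPoly (m : ℕ) (L : Finset (Fin (2*m)))
    (S : Finset (Fin (2*m))) (hS : S.card = m - 1) :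
    (pPoly m L).coeff (eFun m S 1) = if S ⊆ L then 1 else 0 := by
  classical
  unfold pPoly
  rw [MvPolynomial.coeff_sum]
  have hterm : ∀ T ∈ L.powerset.filter (fun T => T.card = m - 1),
      ((MvPolynomial.X (none : Option (Fin (2*m))) : PolyRing m) *
        ∏ j ∈ T, MvPolynomial.X (some j)).coeff (eFun m S 1) =
      if T = S then 1 else 0 := by
    intro T _
    rw [← pow_one (MvPolynomial.X (none : Option (Fin (2*m))) : PolyRing m),
      term_eq_monomial, MvPolynomial.coeff_monomial]
    congr 1
    refine propext ⟨fun h => eFun_inj h, fun h => ?_⟩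
    subst h; rfl
  rw [Finset.sum_congr rfl hterm, Finset.sum_ite_eq'
    (L.powerset.filter fun T => T.card = m - 1) S (fun _ => (1 : ZMod 2))]
  simp [hS]

/-- **Lemma 7 (ii).** The `ℤ/2`-linear map `X_{m+1} → (ℤ/2)[R, V_1, …, V_{n-1}]`,
`ξ ↦ ∑_L ξ_L f_L`, is injective. -/
theorem statement11 (m : ℕ) (hm : 2 ≤ m)
    (ξ : {L : Finset (Fin (2*m)) // L.card = m + 1} → ZMod 2)
    (hker : lcomb (fun L : {L : Finset (Fin (2*m)) // L.card = m + 1} =>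
      pPoly m L.1) ξ = 0)
    (hf : lcomb (fun L : {L : Finset (Fin (2*m)) // L.card = m + 1} =>
      fPoly m L.1) ξ = 0) :
    ξ = 0 := by
  classical
  have key : ∀ S : Finset (Fin (2*m)), S.card ≤ m - 1 →
      (∑ L : {L : Finset (Fin (2*m)) // L.card = m + 1},
        (if S ⊆ L.1 then ξ L else 0)) = 0 := by
    intro S hScard
    by_cases hS2 : S.card ≤ m - 2
    · have h := congrArg (MvPolynomial.coeff (eFun m S (m - S.card))) hf
      simp only [lcomb, LinearMap.coe_mk, AddHom.coe_mk, MvPolynomial.coeff_zero] at h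
      rw [MvPolynomial.coeff_sum] at h
      calc (∑ L : {L : Finset (Fin (2*m)) // L.card = m + 1}, if S ⊆ L.1 then ξ L else 0)
          = ∑ L : {L : Finset (Fin (2*m)) // L.card = m + 1},
              MvPolynomial.coeff (eFun m S (m - S.card)) (ξ L • fPoly m L.1) := by
            refine Finset.sum_congr rfl fun L _ => ?_
            rw [MvPolynomial.coeff_smul, coeff_fPoly m L.1 L.2 S hS2, smul_eq_mul,
              mul_ite, mul_one, mul_zero]
        _ = 0 := h
    · have hS1 : S.card = m - 1 := by omega
      have h := congrArg (MvPolynomial.coeff (eFun m S 1)) hker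
      simp only [lcomb, LinearMap.coe_mk, AddHom.coe_mk, MvPolynomial.coeff_zero] at h
      rw [MvPolynomial.coeff_sum] at h
      calc (∑ L : {L : Finset (Fin (2*m)) // L.card = m + 1}, if S ⊆ L.1 then ξ L else 0)
          = ∑ L : {L : Finset (Fin (2*m)) // L.card = m + 1},
              MvPolynomial.coeff (eFun m S 1) (ξ L • pPoly m L.1) := by
            refine Finset.sum_congr rfl fun L _ => ?_
            rw [MvPolynomial.coeff_smul, coeff_pPoly m L.1 S hS1, smul_eq_mul,
              mul_ite, mul_one, mul_zero]
        _ = 0 := h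
  funext L₀
  show ξ L₀ = 0
  set T₀ : Finset (Fin (2*m)) := L₀.1ᶜ with hT₀
  have hT₀card : T₀.card = m - 1 := by
    rw [hT₀, Finset.card_compl, L₀.2, Fintype.card_fin]; omega
  have h0 : (∑ S ∈ T₀.powerset, ∑ L : {L : Finset (Fin (2*m)) // L.card = m + 1},
      (if S ⊆ L.1 then ξ L else 0)) = 0 := by
    refine Finset.sum_eq_zero fun S hS => key S ?_
    rw [Finset.mem_powerset] at hS
    calc S.card ≤ T₀.card := Finset.card_le_card hS
    _ = m - 1 := hT₀card
  rw [Finset.sum_comm] at h0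
  have hinner : ∀ L : {L : Finset (Fin (2*m)) // L.card = m + 1},
      (∑ S ∈ T₀.powerset, if S ⊆ L.1 then ξ L else 0) =
        (if L = L₀ then ξ L₀ else 0) := by
    intro L
    rw [← Finset.sum_filter]
    have hfil : T₀.powerset.filter (fun S => S ⊆ L.1) = (T₀ ∩ L.1).powerset := by
      ext S
      simp only [Finset.mem_filter, Finset.mem_powerset, Finset.subset_inter_iff]
    rw [hfil, Finset.sum_const, Finset.card_powerset]
    by_cases hL : L = L₀
    · subst hL
      have : T₀ ∩ L.1 = ∅ := by ext x; simp [hT₀]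
      simp [this]
    · have hne : (T₀ ∩ L.1) ≠ ∅ := by
        intro hempty
        apply hL
        have hsub : L.1 ⊆ L₀.1 := by
          intro x hx
          by_contra hx0
          have : x ∈ T₀ ∩ L.1 := Finset.mem_inter.mpr ⟨Finset.mem_compl.mpr hx0, hx⟩
          simp [hempty] at this
        exact Subtype.ext (Finset.eq_of_subset_of_card_le hsub (by rw [L.2, L₀.2]))
      have hpos : 1 ≤ (T₀ ∩ L.1).card :=
        Finset.card_pos.mpr (Finset.nonempty_iff_ne_empty.mpr hne)
      have h2 : (2 ^ (T₀ ∩ L.1).card) • ξ L = 0 := by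
        obtain ⟨k, hk⟩ := Nat.exists_eq_add_of_le hpos
        rw [hk, pow_add, pow_one, nsmul_eq_mul]
        push_cast
        rw [show (2:ZMod 2) = 0 from rfl]
        ring
      rw [h2, if_neg hL]
  rw [Finset.sum_congr rfl (fun L _ => hinner L),
    Finset.sum_ite_eq' Finset.univ L₀ (fun _ => ξ L₀)] at h0
  simpa using h0


end
end

section
/- Let m ≥ 2. Let C_{m+1} and C_{m−1} be the ℤ/2-vector spaces with bases the (m+1)-element subsets and the (m−1)-element subsets, respectively, of {1, …, 2m}, and let ∂_{m+1} : C_{m+1} → C_{m−1} be the ℤ/2-linear map sending each (m+1)-element subset Δ to the sum of all (m−1)-element subsets of Δ. Then dim_{ℤ/2} ker(∂_{m+1}) = C(2m, m+1) − Σ_{i=0}^{m−1} 2^{m−1−i}·C(2i, i). -/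
open CategoryTheory AlgebraicTopology Finset

noncomputable section

namespace S14
abbrev F : Type := ZMod 2
abbrev sub (n k : ℕ) : Type := {S : Finset (Fin n) // S.card = k}

lemma lcomb_apply_pt {ι κ : Type} [Fintype ι] [Fintype κ] (v : ι → κ → F) (x : ι → F) (j : κ) :
    lcomb v x j = ∑ i, x i * v i j := by
  show (∑ i, x i • v i) j = _
  simp [Finset.sum_apply]

lemma lcomb_comp {ι κ lam : Type} [Fintype ι] [Fintype κ] [Fintype lam]
    (v : ι → κ → F) (w : κ → lam → F) :
    (lcomb w) ∘ₗ (lcomb v) = lcomb (fun i => lcomb w (v i)) := by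
  refine LinearMap.ext fun x => ?_
  show lcomb w (lcomb v x) = _
  funext j
  rw [lcomb_apply_pt, lcomb_apply_pt]
  have : ∀ i, x i * (lcomb w (v i)) j = ∑ k, x i * (v i k * w k j) := by
    intro i
    rw [lcomb_apply_pt, Finset.mul_sum]
  simp only [this]
  rw [Finset.sum_comm]
  congr 1; funext k
  rw [lcomb_apply_pt, Finset.sum_mul]
  congr 1; funext i
  ring

lemma lcomb_add {ι κ : Type} [Fintype ι] [Fintype κ] (v w : ι → κ → F) :
    lcomb v + lcomb w = lcomb (fun i => v i + w i) := by
  refine LinearMap.ext fun x => ?_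
  show lcomb v x + lcomb w x = _
  funext j
  simp only [Pi.add_apply, lcomb_apply_pt]
  rw [← Finset.sum_add_distrib]
  congr 1; funext i
  ring

lemma lcomb_diag {ι : Type} [Fintype ι] [DecidableEq ι] :
    lcomb (fun i (j : ι) => if i = j then (1 : F) else 0) = LinearMap.id := by
  refine LinearMap.ext fun x => ?_
  show (lcomb _) x = x
  funext j
  rw [lcomb_apply_pt]
  simp [Finset.sum_ite_eq']

lemma sum_ind {κ : Type} [Fintype κ] (P Q : κ → Prop) [DecidablePred P] [DecidablePred Q] :
    (∑ k, (if P k then (1:F) else 0) * (if Q k then (1:F) else 0))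
      = ((univ.filter fun k => P k ∧ Q k).card : F) := by
  have h : ∀ k, (if P k then (1:F) else 0) * (if Q k then 1 else 0)
      = if P k ∧ Q k then 1 else 0 := by
    intro k; by_cases hP : P k <;> by_cases hQ : Q k <;> simp [hP, hQ]
  simp only [h]
  rw [Finset.sum_boole]

lemma count_between {n : ℕ} (A B : Finset (Fin n)) (hAB : A ⊆ B) (b : ℕ) (hA : A.card ≤ b) :
    (univ.filter (fun S : sub n b => A ⊆ S.1 ∧ S.1 ⊆ B)).card
      = (B.card - A.card).choose (b - A.card) := by
  have : (univ.filter (fun S : sub n b => A ⊆ S.1 ∧ S.1 ⊆ B)).card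
      = ((B \ A).powersetCard (b - A.card)).card := by
    refine card_bij' (fun S _ => S.1 \ A)
      (fun C hC => ⟨C ∪ A, ?_⟩) ?_ ?_ ?_ ?_
    · rw [mem_powersetCard] at hC
      rw [card_union_of_disjoint, hC.2]
      · omega
      · exact Finset.disjoint_of_subset_left hC.1 (Finset.sdiff_disjoint)
    · intro S hS
      simp only [mem_filter, mem_univ, true_and] at hS
      rw [mem_powersetCard]
      constructor
      · exact Finset.sdiff_subset_sdiff hS.2 (le_refl A)
      · rw [card_sdiff_of_subset hS.1, S.2]
    · intro C hC
      simp only [mem_filter, mem_univ, true_and]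
      rw [mem_powersetCard] at hC
      constructor
      · exact subset_union_right
      · exact union_subset (hC.1.trans (sdiff_subset)) hAB
    · intro S hS
      simp only [mem_filter, mem_univ, true_and] at hS
      exact Subtype.ext (sdiff_union_of_subset hS.1)
    · intro C hC
      rw [mem_powersetCard] at hC
      exact union_sdiff_cancel_right
        (Finset.disjoint_of_subset_left hC.1 (Finset.sdiff_disjoint))
  rw [this, card_powersetCard, card_sdiff_of_subset hAB]

lemma count_empty {n : ℕ} (A B : Finset (Fin n)) (b : ℕ) (hb : b < A.card) :
    (univ.filter (fun S : sub n b => A ⊆ S.1 ∧ S.1 ⊆ B)).card = 0 := by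
  rw [Finset.card_eq_zero, Finset.filter_eq_empty_iff]
  rintro S -
  rintro ⟨h1, -⟩
  have := Finset.card_le_card h1
  omega

def dv (n a b : ℕ) : sub n a → sub n b → F := fun S T => if T.1 ⊆ S.1 then 1 else 0
def uv (n a b : ℕ) : sub n a → sub n b → F := fun S T => if S.1 ⊆ T.1 then 1 else 0

def mapD (n a b : ℕ) : (sub n a → F) →ₗ[F] (sub n b → F) := lcomb (dv n a b)
def mapU (n a b : ℕ) : (sub n a → F) →ₗ[F] (sub n b → F) := lcomb (uv n a b)

lemma lcomb_eq_zero {ι κ : Type} [Fintype ι] [Fintype κ] (v : ι → κ → F)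
    (hv : ∀ i j, v i j = 0) : lcomb v = 0 := by
  refine LinearMap.ext fun x => ?_
  show ∑ i, x i • v i = _
  funext j
  simp [Finset.sum_apply, hv]

lemma D_comp_D (n a b c : ℕ) (h2 : c + 2 = b) (h1 : b + 2 = a) :
    (mapD n b c) ∘ₗ (mapD n a b) = 0 := by
  rw [mapD, mapD, lcomb_comp]
  apply lcomb_eq_zero
  intro S T
  rw [lcomb_apply_pt]
  have : ∀ k : sub n b, dv n a b S k * dv n b c k T
      = (if (T.1 ⊆ k.1) then (1:F) else 0) * (if (k.1 ⊆ S.1) then (1:F) else 0) := by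
    intro k; rw [dv, dv]; ring
  rw [Finset.sum_congr rfl (fun k _ => this k), sum_ind]
  by_cases hTS : T.1 ⊆ S.1
  · rw [count_between T.1 S.1 hTS b (by omega)]
    rw [T.2, S.2]
    have : (a - c).choose (b - c) = 6 := by
      have ha : a - c = 4 := by omega
      have hb : b - c = 2 := by omega
      rw [ha, hb]; rfl
    rw [this]
    decide
  · have : (univ.filter fun k : sub n b => T.1 ⊆ k.1 ∧ k.1 ⊆ S.1).card = 0 := by
      rw [Finset.card_eq_zero, Finset.filter_eq_empty_iff]
      rintro k - ⟨hk1, hk2⟩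
      exact hTS (hk1.trans hk2)
    rw [this]
    simp

lemma choose_two_mod_two (j : ℕ) : j.choose 2 % 2 = 1 ↔ (j % 4 = 2 ∨ j % 4 = 3) := by
  induction j with
  | zero => simp
  | succ n ih =>
    have h : (n+1).choose 2 = n + n.choose 2 := by
      rw [Nat.choose_succ_succ, Nat.choose_one_right]
    omega

lemma parity_key (m k : ℕ) (hk : k ≤ 2*m) (hpar : k % 2 ≠ m % 2) :
    (k.choose 2 + (2*m - k).choose 2) % 2 = 1 := by
  have h1 := choose_two_mod_two k
  have h2 := choose_two_mod_two (2*m - k)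
  omega

lemma cast_F_eq (a : ℕ) : (a : ZMod 2) = if a % 2 = 1 then 1 else 0 := by
  rw [← ZMod.natCast_mod a 2]
  rcases Nat.mod_two_eq_zero_or_one a with h | h <;> rw [h] <;> simp

end S14

namespace S14

lemma homotopy (m n : ℕ) (hn : n = 2*m) (c k d : ℕ) (h1 : c + 2 = k) (h2 : k + 2 = d)
    (hpar : k % 2 ≠ m % 2) :
    (mapU n c k) ∘ₗ (mapD n k c) + (mapD n d k) ∘ₗ (mapU n k d) = LinearMap.id := by
  rw [mapU, mapD, mapD, mapU, lcomb_comp, lcomb_comp, lcomb_add, ← lcomb_diag]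
  congr 1
  funext S Γ
  have hkn : k ≤ n := by
    have h := Finset.card_le_card (Finset.subset_univ S.1)
    rwa [S.2, Finset.card_univ, Fintype.card_fin] at h
  -- first term: number of c-subsets of S ∩ Γ
  have t1 : lcomb (uv n c k) (dv n k c S) Γ = (((S.1 ∩ Γ.1).card.choose c : ℕ) : F) := by
    rw [lcomb_apply_pt]
    have e : ∀ Sg : sub n c, dv n k c S Sg * uv n c k Sg Γ
        = (if (Sg.1 ⊆ S.1) then (1:F) else 0) * (if (Sg.1 ⊆ Γ.1) then (1:F) else 0) := by
      intro Sg; rw [dv, uv]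
    rw [Finset.sum_congr rfl (fun Sg _ => e Sg), sum_ind]
    have hfe : (univ.filter fun Sg : sub n c => Sg.1 ⊆ S.1 ∧ Sg.1 ⊆ Γ.1)
        = (univ.filter fun Sg : sub n c => (∅ : Finset (Fin n)) ⊆ Sg.1 ∧ Sg.1 ⊆ S.1 ∩ Γ.1) := by
      apply Finset.filter_congr
      intro Sg _
      simp [Finset.subset_inter_iff]
    rw [hfe, count_between ∅ (S.1 ∩ Γ.1) (Finset.empty_subset _) c (by simp)]
    simp
  -- second term: number of d-supersets of S ∪ Γ
  have t2 : lcomb (dv n d k) (uv n k d S) Γ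
      = (((univ.filter fun Δ : sub n d => (S.1 ∪ Γ.1) ⊆ Δ.1 ∧ Δ.1 ⊆ Finset.univ).card : ℕ) : F) := by
    rw [lcomb_apply_pt]
    have e : ∀ Δ : sub n d, uv n k d S Δ * dv n d k Δ Γ
        = (if (S.1 ⊆ Δ.1) then (1:F) else 0) * (if (Γ.1 ⊆ Δ.1) then (1:F) else 0) := by
      intro Δ; rw [dv, uv]
    rw [Finset.sum_congr rfl (fun Δ _ => e Δ), sum_ind]
    congr 2
    apply Finset.filter_congr
    intro Δ _
    simp [Finset.union_subset_iff]
  rw [Pi.add_apply, t1, t2]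
  set i := (S.1 ∩ Γ.1).card with hi
  have hic : i ≤ k := by
    have := Finset.card_le_card (Finset.inter_subset_left (s₁ := S.1) (s₂ := Γ.1))
    rwa [S.2] at this
  have hiu : (S.1 ∪ Γ.1).card + i = 2 * k := by
    have := Finset.card_union_add_card_inter S.1 Γ.1
    rw [S.2, Γ.2] at this
    omega
  have hun : (S.1 ∪ Γ.1).card ≤ n := by
    have h := Finset.card_le_card (Finset.subset_univ (S.1 ∪ Γ.1))
    rwa [Finset.card_univ, Fintype.card_fin] at h
  by_cases hSG : S = Γ
  · -- diagonal entry
    subst hSG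
    simp only [Finset.inter_self] at hi
    have hik : i = k := by rw [hi, S.2]
    have huk : (S.1 ∪ S.1).card = k := by rw [Finset.union_self, S.2]
    rw [count_between (S.1 ∪ S.1) Finset.univ (Finset.subset_univ _) d (by omega)]
    rw [hik, huk, Finset.card_univ, Fintype.card_fin]
    have hc1 : k.choose c = k.choose 2 := by
      have : k - c = 2 := by omega
      rw [← this, Nat.choose_symm (by omega)]
    have hc2 : d - k = 2 := by omega
    have hp : (k.choose 2 + (n - k).choose 2) % 2 = 1 := by
      rw [hn]
      exact parity_key m k (by omega) hpar
    rw [hc1, hc2, if_pos rfl, ← Nat.cast_add, cast_F_eq, hp]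
    simp
  · rw [if_neg hSG]
    have hine : i ≠ k := by
      intro hik
      apply hSG
      have h1 : S.1 ∩ Γ.1 = S.1 := by
        apply Finset.eq_of_subset_of_card_le (Finset.inter_subset_left)
        rw [← hi, hik, S.2]
      have h2 : S.1 ⊆ Γ.1 := by
        rw [← h1]; exact Finset.inter_subset_right
      exact Subtype.ext (Finset.eq_of_subset_of_card_le h2 (by rw [S.2, Γ.2]))
    rcases Nat.lt_or_ge i c with hlt | hge
    · -- i < c : both terms vanish
      rw [Nat.choose_eq_zero_of_lt hlt]
      have hz : (univ.filter fun Δ : sub n d => (S.1 ∪ Γ.1) ⊆ Δ.1 ∧ Δ.1 ⊆ Finset.univ).card = 0 :=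
        count_empty _ _ _ (by omega)
      rw [hz]
      simp
    · -- i = c or i = c + 1
      rw [count_between (S.1 ∪ Γ.1) Finset.univ (Finset.subset_univ _) d (by omega),
        Finset.card_univ, Fintype.card_fin]
      rcases Nat.lt_or_ge i k with _ | _
      · have hcases : i = c ∨ i = c + 1 := by omega
        rcases hcases with hic' | hic'
        · -- i = c : coefficients 1 + 1
          have hu : (S.1 ∪ Γ.1).card = d := by omega
          rw [hic', Nat.choose_self, hu, Nat.sub_self, Nat.choose_zero_right]
          rw [← Nat.cast_add, cast_F_eq]
          norm_num
        · -- i = c + 1 : coefficients (c+1) + (n - k - 1)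
          have hu : (S.1 ∪ Γ.1).card = k + 1 := by omega
          have hcc : (c+1).choose c = c + 1 := by
            have : (c+1) - c = 1 := by omega
            rw [← Nat.choose_symm (by omega), this, Nat.choose_one_right]
          have hdd : d - (k+1) = 1 := by omega
          rw [hic', hu, hcc, hdd, Nat.choose_one_right, ← Nat.cast_add, cast_F_eq]
          have : (c + 1 + (n - (k+1))) % 2 = 0 := by omega
          rw [this]
          norm_num
      · omega

end S14

namespace S14


lemma ker_eq_range (m n : ℕ) (hn : n = 2*m) (c k d : ℕ) (h1 : c + 2 = k) (h2 : k + 2 = d)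
    (hpar : k % 2 ≠ m % 2) :
    LinearMap.ker (mapD n k c) = LinearMap.range (mapD n d k) := by
  apply le_antisymm
  · intro x hx
    rw [LinearMap.mem_ker] at hx
    have H := LinearMap.congr_fun (homotopy m n hn c k d h1 h2 hpar) x
    simp only [LinearMap.add_apply, LinearMap.comp_apply, LinearMap.id_apply, hx, map_zero,
      zero_add] at H
    exact ⟨mapU n k d x, H⟩
  · rintro x ⟨y, rfl⟩
    rw [LinearMap.mem_ker]
    exact LinearMap.congr_fun (D_comp_D n d k c h1 h2) y

lemma finrank_sub (n k : ℕ) : Module.finrank F (sub n k → F) = n.choose k := by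
  rw [Module.finrank_pi, Fintype.card_finset_len, Fintype.card_fin]

def rk (m j : ℕ) : ℕ := Module.finrank F (LinearMap.range (mapD (2*m) (m+1+2*j) (m-1+2*j)))

lemma rk_eq (m j a b : ℕ) (ha : a = m+1+2*j) (hb : b = m-1+2*j) :
    rk m j = Module.finrank F (LinearMap.range (mapD (2*m) a b)) := by
  subst ha; subst hb; rfl

lemma rk_rel (m : ℕ) (hm : 1 ≤ m) (j : ℕ) :
    rk m j + rk m (j+1) = (2*m).choose (m+1+2*j) := by
  have hker : LinearMap.ker (mapD (2*m) (m+1+2*j) (m-1+2*j))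
      = LinearMap.range (mapD (2*m) (m+3+2*j) (m+1+2*j)) :=
    ker_eq_range m (2*m) rfl (m-1+2*j) (m+1+2*j) (m+3+2*j) (by omega) (by omega) (by omega)
  have h := LinearMap.finrank_range_add_finrank_ker (mapD (2*m) (m+1+2*j) (m-1+2*j))
  rw [hker, finrank_sub] at h
  rw [rk_eq m j (m+1+2*j) (m-1+2*j) rfl rfl,
    rk_eq m (j+1) (m+3+2*j) (m+1+2*j) (by ring) (by omega)]
  exact h

lemma rk_zero (m j : ℕ) (h : 2*m < m+1+2*j) : rk m j = 0 := by
  have hle := LinearMap.finrank_range_le (mapD (2*m) (m+1+2*j) (m-1+2*j))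
  rw [finrank_sub, Nat.choose_eq_zero_of_lt h] at hle
  rw [rk]
  omega

lemma telescope (f : ℕ → ℤ) (cc : ℕ → ℤ) (h : ∀ t, f t + f (t+1) = cc t) (J : ℕ) :
    ∑ t ∈ Finset.range J, (-1)^t * cc t = f 0 - (-1)^J * f J := by
  induction J with
  | zero => simp
  | succ J ih =>
    rw [Finset.sum_range_succ, ih, ← h J, pow_succ]
    ring

def Ssum (m : ℕ) : ℤ := ∑ t ∈ Finset.range (m+1), (-1)^t * ((2*m).choose (m+1+2*t) : ℤ)

lemma pascal2 (a b : ℕ) : (a+2).choose (b+2) = a.choose b + 2 * a.choose (b+1) + a.choose (b+2) := by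
  rw [show a+2 = (a+1)+1 from rfl, Nat.choose_succ_succ (a+1) (b+1),
    Nat.choose_succ_succ a b, Nat.choose_succ_succ a (b+1)]
  ring

lemma Ssum_rec (M : ℕ) : Ssum (M+1) = 2 * Ssum M + ((2*M).choose M : ℤ) := by
  have hpt : ∀ t, ((2*(M+1)).choose ((M+1)+1+2*t) : ℤ)
      = ((2*M).choose (M+2*t) : ℤ) + 2 * ((2*M).choose (M+1+2*t) : ℤ)
        + ((2*M).choose (M+2+2*t) : ℤ) := by
    intro t
    have e1 : 2*(M+1) = 2*M+2 := by ring
    have e2 : (M+1)+1+2*t = (M+2*t)+2 := by ring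
    rw [e1, e2, pascal2]
    push_cast
    have e3 : M+2*t+1 = M+1+2*t := by ring
    have e4 : M+2*t+2 = M+2+2*t := by ring
    rw [e3, e4]
  rw [Ssum]
  calc ∑ t ∈ Finset.range (M+1+1), (-1:ℤ)^t * ((2*(M+1)).choose ((M+1)+1+2*t) : ℤ)
      = ∑ t ∈ Finset.range (M+2), ((-1:ℤ)^t * ((2*M).choose (M+2*t) : ℤ)
          + 2 * ((-1:ℤ)^t * ((2*M).choose (M+1+2*t) : ℤ))
          + (-1:ℤ)^t * ((2*M).choose (M+2+2*t) : ℤ)) := by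
        apply Finset.sum_congr rfl
        intro t _
        rw [hpt t]
        ring
    _ = (∑ t ∈ Finset.range (M+2), (-1:ℤ)^t * ((2*M).choose (M+2*t) : ℤ))
          + 2 * (∑ t ∈ Finset.range (M+2), (-1:ℤ)^t * ((2*M).choose (M+1+2*t) : ℤ))
          + ∑ t ∈ Finset.range (M+2), (-1:ℤ)^t * ((2*M).choose (M+2+2*t) : ℤ) := by
        rw [Finset.sum_add_distrib, Finset.sum_add_distrib, Finset.mul_sum]
    _ = 2 * Ssum M + ((2*M).choose M : ℤ) := by
        have hB : ∑ t ∈ Finset.range (M+2), (-1:ℤ)^t * ((2*M).choose (M+1+2*t) : ℤ)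
            = Ssum M := by
          rw [Finset.sum_range_succ, Ssum]
          have : (2*M).choose (M+1+2*(M+1)) = 0 := Nat.choose_eq_zero_of_lt (by omega)
          rw [this]
          simp
        have hC : ∑ t ∈ Finset.range (M+2), (-1:ℤ)^t * ((2*M).choose (M+2+2*t) : ℤ)
            = ∑ t ∈ Finset.range (M+1), (-1:ℤ)^t * ((2*M).choose (M+2+2*t) : ℤ) := by
          rw [Finset.sum_range_succ]
          have : (2*M).choose (M+2+2*(M+1)) = 0 := Nat.choose_eq_zero_of_lt (by omega)
          rw [this]
          simp
        have hA : ∑ t ∈ Finset.range (M+2), (-1:ℤ)^t * ((2*M).choose (M+2*t) : ℤ)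
            = ((2*M).choose M : ℤ)
              - ∑ t ∈ Finset.range (M+1), (-1:ℤ)^t * ((2*M).choose (M+2+2*t) : ℤ) := by
          rw [Finset.sum_range_succ']
          have e : ∀ t, (-1:ℤ)^(t+1) * ((2*M).choose (M+2*(t+1)) : ℤ)
              = -((-1:ℤ)^t * ((2*M).choose (M+2+2*t) : ℤ)) := by
            intro t
            have : M+2*(t+1) = M+2+2*t := by ring
            rw [this, pow_succ]
            ring
          rw [Finset.sum_congr rfl (fun t _ => e t), Finset.sum_neg_distrib]
          simp
          ring
        rw [hA, hB, hC]
        ring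

lemma alpha_rec (M : ℕ) : alphaNum (M+1) = 2 * alphaNum M + (2*M).choose M := by
  rw [alphaNum, alphaNum, Finset.sum_range_succ]
  have h1 : M + 1 - 1 - M = 0 := by omega
  rw [h1, pow_zero, one_mul]
  congr 1
  rw [Finset.mul_sum]
  apply Finset.sum_congr rfl
  intro i hi
  rw [Finset.mem_range] at hi
  have h2 : M + 1 - 1 - i = (M - 1 - i) + 1 := by omega
  rw [h2, pow_succ]
  ring

lemma Ssum_eq_alpha (m : ℕ) : Ssum m = (alphaNum m : ℤ) := by
  induction m with
  | zero =>
    rw [Ssum, alphaNum]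
    simp
  | succ M ih =>
    rw [Ssum_rec, alpha_rec, ih]
    push_cast
    ring

end S14


/-- The kernel of the boundary map `∂_{m+1} : C_{m+1} → C_{m-1}` (sending an
`(m+1)`-element subset of `{1, …, 2m}` to the sum of its `(m-1)`-element subsets) has
dimension `C(2m, m+1) - ∑_{i=0}^{m-1} 2^{m-1-i} C(2i, i)` over `ℤ/2`. -/

theorem statement14 (m : ℕ) (hm : 2 ≤ m) :
    Module.finrank (ZMod 2)
      (LinearMap.ker (lcomb
        (fun Δ : {S : Finset (Fin (2*m)) // S.card = m + 1} =>
          (fun Γ : {S : Finset (Fin (2*m)) // S.card = m - 1} =>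
            if Γ.1 ⊆ Δ.1 then (1 : ZMod 2) else 0))))
      = (2*m).choose (m+1) - alphaNum m := by
  have hmap : (lcomb
        (fun Δ : {S : Finset (Fin (2*m)) // S.card = m + 1} =>
          (fun Γ : {S : Finset (Fin (2*m)) // S.card = m - 1} =>
            if Γ.1 ⊆ Δ.1 then (1 : ZMod 2) else 0)))
      = S14.mapD (2*m) (m+1) (m-1) := rfl
  rw [hmap]
  rw [S14.ker_eq_range m (2*m) rfl (m-1) (m+1) (m+3) (by omega) (by omega) (by omega)]
  rw [← S14.rk_eq m 1 (m+3) (m+1) (by ring) (by omega)]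
  -- telescope the rank recursion
  have hrel : ∀ t : ℕ, ((S14.rk m (t+1) : ℤ)) + ((S14.rk m (t+1+1) : ℤ))
      = (((2*m).choose (m+3+2*t) : ℕ) : ℤ) := by
    intro t
    have h := S14.rk_rel m (by omega) (t+1)
    have e : m+1+2*(t+1) = m+3+2*t := by ring
    rw [e] at h
    exact_mod_cast congrArg (Nat.cast : ℕ → ℤ) h
  have ht := S14.telescope (fun t => (S14.rk m (t+1) : ℤ))
    (fun t => (((2*m).choose (m+3+2*t) : ℕ) : ℤ)) hrel m
  have hz : S14.rk m (m+1) = 0 := S14.rk_zero m (m+1) (by omega)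
  rw [hz] at ht
  simp only [Nat.cast_zero, mul_zero, sub_zero] at ht
  -- split off the first term of Ssum
  have hs : S14.Ssum m = (((2*m).choose (m+1) : ℕ) : ℤ)
      - ∑ t ∈ Finset.range m, (-1:ℤ)^t * (((2*m).choose (m+3+2*t) : ℕ) : ℤ) := by
    rw [S14.Ssum, Finset.sum_range_succ']
    have e : ∀ t : ℕ, (-1:ℤ)^(t+1) * (((2*m).choose (m+1+2*(t+1)) : ℕ) : ℤ)
        = -((-1:ℤ)^t * (((2*m).choose (m+3+2*t) : ℕ) : ℤ)) := by
      intro t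
      have e2 : m+1+2*(t+1) = m+3+2*t := by ring
      rw [e2, pow_succ]
      ring
    rw [Finset.sum_congr rfl (fun t _ => e t)]
    simp [Finset.sum_neg_distrib]
    ring
  have halpha := S14.Ssum_eq_alpha m
  have hfinal : (S14.rk m 1 : ℤ) = (((2*m).choose (m+1) : ℕ) : ℤ) - (alphaNum m : ℤ) := by
    have h01 : (0:ℕ)+1 = 1 := rfl
    rw [h01] at ht
    linarith [ht, hs, halpha]
  omega

end
end
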